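/- For every graph G, the maximum over all symmetric signings σ of the number of fixed points of the conjunctive network on G_σ equals max over H ∈ 𝓗'(G) of mis(H), where 𝓗'(G) is the set of graphs obtainable from G by repeatedly choosing a connected subgraph C, contracting C to a single vertex c, and attaching a new pendant vertex c' adjacent only to c (G itself is in 𝓗'(G)). -/

import Mathlib

/-- `S` is a fixed set of the conjunctive network with positive arcs `pos`,
negative arcs `neg`. -/
def IsFixedSet {V : Type} (pos neg : V → V → Prop) (S : Set V) : Prop :=
  ∀ v, v ∈ S ↔ (∀ u, pos u v → u ∈ S) ∧ (∀ u, neg u v → u ∉ S)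

/-- Number of fixed points of the conjunctive network. -/
noncomputable def fixc {V : Type} (pos neg : V → V → Prop) : ℕ :=
  Set.ncard {S : Set V | IsFixedSet pos neg S}

/-- Positive arcs of the signing `σ` of the graph `G`. -/
def posOf {V : Type} (G : SimpleGraph V) (σ : V → V → Bool) : V → V → Prop :=
  fun u v => G.Adj u v ∧ σ u v = true

/-- Negative arcs of the signing `σ` of the graph `G`. -/
def negOf {V : Type} (G : SimpleGraph V) (σ : V → V → Bool) : V → V → Prop :=
  fun u v => G.Adj u v ∧ σ u v = false

/-- `S` is a maximal independent set. -/
def IsMaxIndep {V : Type} (adj : V → V → Prop) (S : Set V) : Prop :=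
  (∀ u ∈ S, ∀ v ∈ S, ¬ adj u v) ∧ ∀ v, v ∉ S → ∃ u ∈ S, adj u v

/-- Number of maximal independent sets. -/
noncomputable def misc {V : Type} (adj : V → V → Prop) : ℕ :=
  Set.ncard {S : Set V | IsMaxIndep adj S}

/-- The graph `H/C` obtained from `H` by contracting `C` to a single vertex `c`
(`Sum.inr 0`) and attaching a new pendant vertex `c'` (`Sum.inr 1`) to `c`. -/
def quotG {W : Type} (H : SimpleGraph W) (C : Set W) :
    SimpleGraph ({v : W // v ∉ C} ⊕ Fin 2) where
  Adj a b :=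
    match a, b with
    | Sum.inl u, Sum.inl v => H.Adj u.1 v.1
    | Sum.inl u, Sum.inr i => i = 0 ∧ ∃ w ∈ C, H.Adj u.1 w
    | Sum.inr i, Sum.inl u => i = 0 ∧ ∃ w ∈ C, H.Adj u.1 w
    | Sum.inr i, Sum.inr j => i ≠ j
  symm := by
    constructor
    rintro (u | i) (v | j) h
    · exact h.symm
    · exact h
    · exact h
    · exact h.symm
  loopless := by
    constructor
    rintro (u | i) h
    · exact H.irrefl h
    · exact h rfl

/-- `𝓗'(G)`: graphs obtained from `G` by repeatedly contracting a connected subgraph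
(on at least two vertices) and attaching a pendant vertex to the contracted vertex. -/
inductive InH' {V : Type} (G : SimpleGraph V) : {W : Type} → SimpleGraph W → Prop where
  | base : InH' G G
  | step {W : Type} {H : SimpleGraph W} (C : Set W)
      (hconn : ∀ u ∈ C, ∀ v ∈ C,
        Relation.ReflTransGen (fun a b => a ∈ C ∧ b ∈ C ∧ H.Adj a b) u v)
      (hnt : ∃ u ∈ C, ∃ v ∈ C, u ≠ v)
      (hH : InH' G H) : InH' G (quotG H C)

-- helpers batch 1
lemma fix_eq_mis {W : Type} (H : SimpleGraph W) (σ : W → W → Bool)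
    (h : ∀ u v, H.Adj u v → σ u v = false) :
    {S : Set W | IsFixedSet (posOf H σ) (negOf H σ) S} = {S | IsMaxIndep H.Adj S} := by
  ext S
  simp only [Set.mem_setOf_eq, IsFixedSet, IsMaxIndep, posOf, negOf]
  constructor
  · intro hf
    constructor
    · intro u hu v hv hadj
      exact (((hf v).mp hv).2 u ⟨hadj, h u v hadj⟩) hu
    · intro v hv
      by_contra hc
      push_neg at hc
      exact hv ((hf v).mpr ⟨fun u ⟨hadj, ht⟩ => absurd (h u v hadj) (by simp [ht]),
        fun u ⟨hadj, _⟩ hu => hc u hu hadj⟩)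
  · intro ⟨hin, hdom⟩ v
    constructor
    · intro hv
      exact ⟨fun u ⟨hadj, ht⟩ => absurd (h u v hadj) (by simp [ht]),
        fun u ⟨hadj, _⟩ hu => hin u hu v hv hadj⟩
    · intro ⟨_, hneg⟩
      by_contra hv
      obtain ⟨u, hu, hadj⟩ := hdom v hv
      exact hneg u ⟨hadj, h u v hadj⟩ hu

lemma fixc_eq_misc {W : Type} (H : SimpleGraph W) (σ : W → W → Bool)
    (h : ∀ u v, H.Adj u v → σ u v = false) :
    fixc (posOf H σ) (negOf H σ) = misc H.Adj := by
  unfold fixc misc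
  rw [fix_eq_mis H σ h]

lemma InH'_trans {V W : Type} {G : SimpleGraph V} {H : SimpleGraph W}
    (h1 : InH' G H) {X : Type} {K : SimpleGraph X} (h2 : InH' H K) : InH' G K := by
  induction h2 with
  | base => exact h1
  | step C hconn hnt hH ih => exact InH'.step C hconn hnt ih

lemma InH'_finite {V W : Type} {G : SimpleGraph V} [Finite V] {H : SimpleGraph W}
    (h : InH' G H) : Finite W := by
  induction h with
  | base => infer_instance
  | step C hconn hnt hH ih => haveI := ih; infer_instance

lemma adj_pend {W : Type} (H : SimpleGraph W) (C : Set W) (u' : {v : W // v ∉ C} ⊕ Fin 2)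
    (h : (quotG H C).Adj u' (Sum.inr 1)) : u' = Sum.inr 0 := by
  match u' with
  | Sum.inl u => exact absurd h.1 (by decide)
  | Sum.inr i =>
    have hi : i = 0 := by
      have h' : i ≠ 1 := h
      fin_cases i
      · rfl
      · exact absurd rfl h'
    rw [hi]

lemma stepA {W : Type} [Finite W] (H : SimpleGraph W) (C : Set W)
    (hconn : ∀ u ∈ C, ∀ v ∈ C,
      Relation.ReflTransGen (fun a b => a ∈ C ∧ b ∈ C ∧ H.Adj a b) u v)
    (hnt : ∃ u ∈ C, ∃ v ∈ C, u ≠ v)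
    (τ : ({v : W // v ∉ C} ⊕ Fin 2) → ({v : W // v ∉ C} ⊕ Fin 2) → Bool)
    (hτ : ∀ a b, τ a b = τ b a) :
    ∃ σ : W → W → Bool, (∀ u v, σ u v = σ v u) ∧
      fixc (posOf (quotG H C) τ) (negOf (quotG H C) τ) ≤
        fixc (posOf H σ) (negOf H σ) := by
  classical
  set c : ({v : W // v ∉ C} ⊕ Fin 2) := Sum.inr 0 with hcdef
  set σ : W → W → Bool := fun u v =>
    if hu : u ∈ C then (if hv : v ∈ C then true else τ c (Sum.inl ⟨v, hv⟩))
    else if hv : v ∈ C then τ (Sum.inl ⟨u, hu⟩) c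
    else τ (Sum.inl ⟨u, hu⟩) (Sum.inl ⟨v, hv⟩) with hσdef
  have σin : ∀ {u v}, u ∈ C → v ∈ C → σ u v = true := by
    intro u v hu hv; simp [hσdef, hu, hv]
  have σcv : ∀ {u v} (_ : u ∈ C) (hv : v ∉ C), σ u v = τ c (Sum.inl ⟨v, hv⟩) := by
    intro u v hu hv; simp [hσdef, hu, hv]
  have σvc : ∀ {u v} (hu : u ∉ C) (_ : v ∈ C), σ u v = τ (Sum.inl ⟨u, hu⟩) c := by
    intro u v hu hv; simp [hσdef, hu, hv]
  have σout : ∀ {u v} (hu : u ∉ C) (hv : v ∉ C),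
      σ u v = τ (Sum.inl ⟨u, hu⟩) (Sum.inl ⟨v, hv⟩) := by
    intro u v hu hv; simp [hσdef, hu, hv]
  have hσsymm : ∀ u v, σ u v = σ v u := by
    intro u v
    by_cases hu : u ∈ C <;> by_cases hv : v ∈ C
    · rw [σin hu hv, σin hv hu]
    · rw [σcv hu hv, σvc hv hu, hτ]
    · rw [σvc hu hv, σcv hv hu, hτ]
    · rw [σout hu hv, σout hv hu, hτ]
  -- every vertex of C has a neighbor in C
  have hnbr : ∀ w ∈ C, ∃ x ∈ C, H.Adj x w := by
    intro w hw
    obtain ⟨a, ha, b, hb, hab⟩ := hnt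
    have hy : ∃ y ∈ C, y ≠ w := by
      by_cases haw : a = w
      · exact ⟨b, hb, fun h => hab (haw.trans h.symm)⟩
      · exact ⟨a, ha, haw⟩
    obtain ⟨y, hy, hyw⟩ := hy
    rcases (hconn w hw y hy).cases_head with h | ⟨x, ⟨_, hxC, hadj⟩, _⟩
    · exact absurd h.symm hyw
    · exact ⟨x, hxC, hadj.symm⟩
  refine ⟨σ, hσsymm, ?_⟩
  set f : Set ({v : W // v ∉ C} ⊕ Fin 2) → Set W :=
    fun F => {v | (v ∈ C ∧ c ∈ F) ∨ ∃ h : v ∉ C, Sum.inl ⟨v, h⟩ ∈ F} with hfdef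
  have mem1 : ∀ F v (hv : v ∉ C), v ∈ f F ↔ Sum.inl (⟨v, hv⟩ : {v : W // v ∉ C}) ∈ F := by
    intro F v hv
    simp only [hfdef, Set.mem_setOf_eq]
    constructor
    · rintro (⟨h, _⟩ | ⟨h, hF⟩)
      · exact absurd h hv
      · exact hF
    · intro hF; exact Or.inr ⟨hv, hF⟩
  have mem2 : ∀ F v, v ∈ C → (v ∈ f F ↔ c ∈ F) := by
    intro F v hv
    simp only [hfdef, Set.mem_setOf_eq]
    constructor
    · rintro (⟨_, h⟩ | ⟨h, _⟩)
      · exact h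
      · exact absurd hv h
    · intro h; exact Or.inl ⟨hv, h⟩
  have hmap : ∀ F, IsFixedSet (posOf (quotG H C) τ) (negOf (quotG H C) τ) F →
      IsFixedSet (posOf H σ) (negOf H σ) (f F) := by
    intro F hF v
    by_cases hv : v ∈ C
    · by_cases hcF : c ∈ F
      · refine iff_of_true ((mem2 F v hv).mpr hcF) ⟨?_, ?_⟩
        · rintro u ⟨hadj, hpos⟩
          by_cases hu : u ∈ C
          · exact (mem2 F u hu).mpr hcF
          · have ht : τ (Sum.inl ⟨u, hu⟩) c = true := by rwa [σvc hu hv] at hpos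
            have hadj' : (quotG H C).Adj (Sum.inl ⟨u, hu⟩) c := ⟨rfl, v, hv, hadj⟩
            exact (mem1 F u hu).mpr (((hF c).mp hcF).1 _ ⟨hadj', ht⟩)
        · rintro u ⟨hadj, hneg⟩
          by_cases hu : u ∈ C
          · rw [σin hu hv] at hneg; exact absurd hneg (by simp)
          · have ht : τ (Sum.inl ⟨u, hu⟩) c = false := by rwa [σvc hu hv] at hneg
            have hadj' : (quotG H C).Adj (Sum.inl ⟨u, hu⟩) c := ⟨rfl, v, hv, hadj⟩
            exact fun hS => ((hF c).mp hcF).2 _ ⟨hadj', ht⟩ ((mem1 F u hu).mp hS)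
      · refine iff_of_false (fun hS => hcF ((mem2 F v hv).mp hS)) ?_
        rintro ⟨h1, _⟩
        obtain ⟨x, hx, hxadj⟩ := hnbr v hv
        exact hcF ((mem2 F x hx).mp (h1 x ⟨hxadj, σin hx hv⟩))
    · by_cases hvF : Sum.inl (⟨v, hv⟩ : {v : W // v ∉ C}) ∈ F
      · refine iff_of_true ((mem1 F v hv).mpr hvF) ⟨?_, ?_⟩
        · rintro u ⟨hadj, hpos⟩
          by_cases hu : u ∈ C
          · have ht : τ c (Sum.inl ⟨v, hv⟩) = true := by rwa [σcv hu hv] at hpos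
            have hadj' : (quotG H C).Adj c (Sum.inl ⟨v, hv⟩) := ⟨rfl, u, hu, hadj.symm⟩
            exact (mem2 F u hu).mpr (((hF _).mp hvF).1 _ ⟨hadj', ht⟩)
          · have ht : τ (Sum.inl ⟨u, hu⟩) (Sum.inl ⟨v, hv⟩) = true := by
              rwa [σout hu hv] at hpos
            have hadj' : (quotG H C).Adj (Sum.inl ⟨u, hu⟩) (Sum.inl ⟨v, hv⟩) := hadj
            exact (mem1 F u hu).mpr (((hF _).mp hvF).1 _ ⟨hadj', ht⟩)
        · rintro u ⟨hadj, hneg⟩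
          by_cases hu : u ∈ C
          · have ht : τ c (Sum.inl ⟨v, hv⟩) = false := by rwa [σcv hu hv] at hneg
            have hadj' : (quotG H C).Adj c (Sum.inl ⟨v, hv⟩) := ⟨rfl, u, hu, hadj.symm⟩
            exact fun hS => ((hF _).mp hvF).2 _ ⟨hadj', ht⟩ ((mem2 F u hu).mp hS)
          · have ht : τ (Sum.inl ⟨u, hu⟩) (Sum.inl ⟨v, hv⟩) = false := by
              rwa [σout hu hv] at hneg
            have hadj' : (quotG H C).Adj (Sum.inl ⟨u, hu⟩) (Sum.inl ⟨v, hv⟩) := hadj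
            exact fun hS => ((hF _).mp hvF).2 _ ⟨hadj', ht⟩ ((mem1 F u hu).mp hS)
      · refine iff_of_false (fun hS => hvF ((mem1 F v hv).mp hS)) ?_
        rintro ⟨h1, h2⟩
        have hnRHS : ¬ ((∀ u, posOf (quotG H C) τ u (Sum.inl ⟨v, hv⟩) → u ∈ F) ∧
            (∀ u, negOf (quotG H C) τ u (Sum.inl ⟨v, hv⟩) → u ∉ F)) :=
          fun h => hvF ((hF _).mpr h)
        rcases not_and_or.mp hnRHS with hA | hB
        · push_neg at hA
          obtain ⟨u', ⟨hadj', ht'⟩, hu'F⟩ := hA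
          match u' with
          | Sum.inl u =>
            have hadjH : H.Adj u.1 v := hadj'
            have : u.1 ∈ f F := h1 u.1 ⟨hadjH, by rw [σout u.2 hv]; exact ht'⟩
            exact hu'F (by rwa [mem1 F u.1 u.2] at this)
          | Sum.inr i =>
            obtain ⟨hi, w, hwC, hwadj⟩ := hadj'
            subst hi
            have : w ∈ f F := h1 w ⟨hwadj.symm, by rw [σcv hwC hv]; exact ht'⟩
            exact hu'F ((mem2 F w hwC).mp this)
        · push_neg at hB
          obtain ⟨u', ⟨hadj', ht'⟩, hu'F⟩ := hB
          match u' with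
          | Sum.inl u =>
            have hadjH : H.Adj u.1 v := hadj'
            have : u.1 ∉ f F := h2 u.1 ⟨hadjH, by rw [σout u.2 hv]; exact ht'⟩
            exact this ((mem1 F u.1 u.2).mpr hu'F)
          | Sum.inr i =>
            obtain ⟨hi, w, hwC, hwadj⟩ := hadj'
            subst hi
            have : w ∉ f F := h2 w ⟨hwadj.symm, by rw [σcv hwC hv]; exact ht'⟩
            exact this ((mem2 F w hwC).mpr hu'F)
  have hinj : Set.InjOn f {F | IsFixedSet (posOf (quotG H C) τ) (negOf (quotG H C) τ) F} := by
    intro F1 hF1 F2 hF2 heq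
    obtain ⟨a, ha, _⟩ := hnt
    have hc12 : c ∈ F1 ↔ c ∈ F2 := by
      rw [← mem2 F1 a ha, ← mem2 F2 a ha, heq]
    have pend : ∀ F, IsFixedSet (posOf (quotG H C) τ) (negOf (quotG H C) τ) F →
        ((Sum.inr 1 : {v : W // v ∉ C} ⊕ Fin 2) ∈ F ↔
          ((τ c (Sum.inr 1) = true → c ∈ F) ∧ (τ c (Sum.inr 1) = false → c ∉ F))) := by
      intro F hF
      rw [hF (Sum.inr 1)]
      constructor
      · intro ⟨hp, hn⟩
        have hadj' : (quotG H C).Adj c (Sum.inr 1) := (by decide : (0 : Fin 2) ≠ 1)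
        exact ⟨fun h => hp c ⟨hadj', h⟩, fun h => hn c ⟨hadj', h⟩⟩
      · intro ⟨hp, hn⟩
        constructor
        · rintro u' ⟨hadj', ht'⟩
          rw [adj_pend H C u' hadj'] at ht' ⊢
          exact hp ht'
        · rintro u' ⟨hadj', ht'⟩
          rw [adj_pend H C u' hadj'] at ht' ⊢
          exact hn ht'
    ext x
    match x with
    | Sum.inl u =>
      rw [← mem1 F1 u.1 u.2, ← mem1 F2 u.1 u.2, heq]
    | Sum.inr i =>
      have h01 : i = 0 ∨ i = 1 := by
        fin_cases i
        · exact Or.inl rfl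
        · exact Or.inr rfl
      rcases h01 with hi | hi <;> subst hi
      · exact hc12
      · rw [pend F1 hF1, pend F2 hF2]
        cases ht : τ c (Sum.inr 1) <;> simp [ht, hc12]
  exact Set.ncard_le_ncard_of_injOn f hmap hinj (Set.toFinite _)

lemma stepB {W : Type} [Finite W] (H : SimpleGraph W) (σ : W → W → Bool)
    (hσ : ∀ u v, σ u v = σ v u) {u₀ v₀ : W} (hadj0 : H.Adj u₀ v₀) (hpos0 : σ u₀ v₀ = true) :
    ∃ (C : Set W) (τ : ({v : W // v ∉ C} ⊕ Fin 2) → ({v : W // v ∉ C} ⊕ Fin 2) → Bool),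
      (∀ u ∈ C, ∀ v ∈ C,
        Relation.ReflTransGen (fun a b => a ∈ C ∧ b ∈ C ∧ H.Adj a b) u v) ∧
      (∃ u ∈ C, ∃ v ∈ C, u ≠ v) ∧
      (∀ a b, τ a b = τ b a) ∧
      fixc (posOf H σ) (negOf H σ) ≤
        fixc (posOf (quotG H C) τ) (negOf (quotG H C) τ) ∧
      {p : ({v : W // v ∉ C} ⊕ Fin 2) × ({v : W // v ∉ C} ⊕ Fin 2) |
          (quotG H C).Adj p.1 p.2 ∧ τ p.1 p.2 = true}.ncard <
        {p : W × W | H.Adj p.1 p.2 ∧ σ p.1 p.2 = true}.ncard := by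
  classical
  set r : W → W → Prop := fun a b => H.Adj a b ∧ σ a b = true with hrdef
  have hrsymm : Symmetric r := fun a b ⟨h1, h2⟩ => ⟨h1.symm, (hσ b a).trans h2⟩
  set C : Set W := {w | Relation.ReflTransGen r u₀ w} with hCdef
  have hu₀ : u₀ ∈ C := Relation.ReflTransGen.refl
  have hv₀ : v₀ ∈ C := Relation.ReflTransGen.single ⟨hadj0, hpos0⟩
  have hCsym : ∀ a ∈ C, ∀ b, Relation.ReflTransGen r a b → b ∈ C :=
    fun a ha b hab => Relation.ReflTransGen.trans ha hab
  have hback : ∀ a ∈ C, Relation.ReflTransGen r a u₀ :=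
    fun a ha => by
      haveI : Std.Symm r := ⟨hrsymm⟩
      exact Relation.ReflTransGen.symmetric.symm _ _ ha
  have hconn : ∀ u ∈ C, ∀ v ∈ C,
      Relation.ReflTransGen (fun a b => a ∈ C ∧ b ∈ C ∧ H.Adj a b) u v := by
    have hlift : ∀ a b, a ∈ C → Relation.ReflTransGen r a b →
        Relation.ReflTransGen (fun x y => x ∈ C ∧ y ∈ C ∧ H.Adj x y) a b := by
      intro a b ha hr
      induction hr with
      | refl => exact Relation.ReflTransGen.refl
      | tail h1 h2 ih =>
        exact Relation.ReflTransGen.tail ih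
          ⟨hCsym a ha _ h1, hCsym a ha _ (h1.tail h2), h2.1⟩
    intro u hu v hv
    exact hlift u v hu (Relation.ReflTransGen.trans (hback u hu) hv)
  have hnt : ∃ u ∈ C, ∃ v ∈ C, u ≠ v := ⟨u₀, hu₀, v₀, hv₀, hadj0.ne⟩
  have hbd : ∀ w ∈ C, ∀ u, u ∉ C → H.Adj w u → σ w u = false := by
    intro w hw u hu hadj
    cases hb : σ w u with
    | false => rfl
    | true => exact absurd (hCsym w hw u (Relation.ReflTransGen.single ⟨hadj, hb⟩)) hu
  set τ : ({v : W // v ∉ C} ⊕ Fin 2) → ({v : W // v ∉ C} ⊕ Fin 2) → Bool :=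
    fun a b => match a, b with
      | Sum.inl u, Sum.inl v => σ u.1 v.1
      | _, _ => false with hτdef
  have τll : ∀ u v, τ (Sum.inl u) (Sum.inl v) = σ u.1 v.1 := fun _ _ => rfl
  have τr2 : ∀ a i, τ a (Sum.inr i) = false := by
    intro a i; match a with
    | Sum.inl u => rfl
    | Sum.inr j => rfl
  have τr1 : ∀ i b, τ (Sum.inr i) b = false := by
    intro i b; match b with
    | Sum.inl u => rfl
    | Sum.inr j => rfl
  have hτsymm : ∀ a b, τ a b = τ b a := by
    intro a b
    match a, b with
    | Sum.inl u, Sum.inl v => exact hσ u.1 v.1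
    | Sum.inl u, Sum.inr j => rfl
    | Sum.inr i, Sum.inl v => rfl
    | Sum.inr i, Sum.inr j => rfl
  refine ⟨C, τ, hconn, hnt, hτsymm, ?_, ?_⟩
  · -- fixc ≤ fixc via injection g
    set g : Set W → Set ({v : W // v ∉ C} ⊕ Fin 2) :=
      fun S => {x | match x with
        | Sum.inl v => v.1 ∈ S
        | Sum.inr i => if i = 0 then u₀ ∈ S else u₀ ∉ S} with hgdef
    have gmem1 : ∀ S (v : {v : W // v ∉ C}), Sum.inl v ∈ g S ↔ v.1 ∈ S := fun _ _ => Iff.rfl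
    have gmem0 : ∀ S, (Sum.inr 0 : {v : W // v ∉ C} ⊕ Fin 2) ∈ g S ↔ u₀ ∈ S := by
      intro S; simp [hgdef]
    have gmemp : ∀ S, (Sum.inr 1 : {v : W // v ∉ C} ⊕ Fin 2) ∈ g S ↔ u₀ ∉ S := by
      intro S; simp [hgdef]
    -- closure properties of fixed sets
    have hcl : ∀ S, IsFixedSet (posOf H σ) (negOf H σ) S →
        ∀ a ∈ S, ∀ b, Relation.ReflTransGen r a b → b ∈ S := by
      intro S hS a ha b hab
      induction hab with
      | refl => exact ha
      | tail h1 h2 ih => exact ((hS _).mp ih).1 _ ⟨h2.1.symm, (hσ _ _).trans h2.2⟩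
    have hdich : ∀ S, IsFixedSet (posOf H σ) (negOf H σ) S →
        ((u₀ ∈ S → C ⊆ S) ∧ (u₀ ∉ S → ∀ w ∈ C, w ∉ S)) := by
      intro S hS
      constructor
      · intro h0 w hw
        exact hcl S hS u₀ h0 w hw
      · intro h0 w hw hwS
        exact h0 (hcl S hS w hwS u₀ (hback w hw))
    have hmap : ∀ S, IsFixedSet (posOf H σ) (negOf H σ) S →
        IsFixedSet (posOf (quotG H C) τ) (negOf (quotG H C) τ) (g S) := by
      intro S hS x
      match x with
      | Sum.inr i =>
        have h01 : i = 0 ∨ i = 1 := by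
          fin_cases i
          · exact Or.inl rfl
          · exact Or.inr rfl
        rcases h01 with hi | hi <;> subst hi
        · -- vertex c
          by_cases h0 : u₀ ∈ S
          · refine iff_of_true ((gmem0 S).mpr h0) ⟨?_, ?_⟩
            · rintro u' ⟨_, ht'⟩
              simp [τr2] at ht'
            · rintro u' ⟨hadj', _⟩
              match u' with
              | Sum.inl u =>
                obtain ⟨_, w, hwC, hwadj⟩ := hadj'
                intro huS
                have hwS : w ∈ S := (hdich S hS).1 h0 hwC
                have : σ w u.1 = false := hbd w hwC u.1 u.2 hwadj.symm
                exact ((hS u.1).mp ((gmem1 S u).mp huS)).2 w ⟨hwadj.symm, this⟩ hwS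
              | Sum.inr j =>
                have hj : j ≠ 0 := hadj'
                intro hjS
                have hj1 : j = 1 := by
                  fin_cases j
                  · exact absurd rfl hj
                  · rfl
                subst hj1
                exact ((gmemp S).mp hjS) h0
          · refine iff_of_false (fun h => h0 ((gmem0 S).mp h)) ?_
            rintro ⟨_, h2⟩
            have hadj' : (quotG H C).Adj (Sum.inr 1) (Sum.inr 0) := (by decide : (1 : Fin 2) ≠ 0)
            exact h2 (Sum.inr 1) ⟨hadj', τr1 1 (Sum.inr 0)⟩ ((gmemp S).mpr h0)
        · -- vertex c'
          by_cases h0 : u₀ ∈ S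
          · refine iff_of_false (fun h => ((gmemp S).mp h) h0) ?_
            rintro ⟨_, h2⟩
            have hadj' : (quotG H C).Adj (Sum.inr 0) (Sum.inr 1) := (by decide : (0 : Fin 2) ≠ 1)
            exact h2 (Sum.inr 0) ⟨hadj', τr1 0 (Sum.inr 1)⟩ ((gmem0 S).mpr h0)
          · refine iff_of_true ((gmemp S).mpr h0) ⟨?_, ?_⟩
            · rintro u' ⟨_, ht'⟩
              simp [τr2] at ht'
            · rintro u' ⟨hadj', _⟩
              rw [adj_pend H C u' hadj']
              exact fun h => h0 ((gmem0 S).mp h)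
      | Sum.inl u =>
        by_cases huS : u.1 ∈ S
        · refine iff_of_true ((gmem1 S u).mpr huS) ⟨?_, ?_⟩
          · rintro u' ⟨hadj', ht'⟩
            match u' with
            | Sum.inl w =>
              rw [τll] at ht'
              have hadjH : H.Adj w.1 u.1 := hadj'
              exact (gmem1 S w).mpr (((hS u.1).mp huS).1 w.1 ⟨hadjH, ht'⟩)
            | Sum.inr j =>
              simp [τr1] at ht'
          · rintro u' ⟨hadj', ht'⟩
            match u' with
            | Sum.inl w =>
              rw [τll] at ht'
              have hadjH : H.Adj w.1 u.1 := hadj'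
              exact fun h => ((hS u.1).mp huS).2 w.1 ⟨hadjH, ht'⟩ ((gmem1 S w).mp h)
            | Sum.inr j =>
              obtain ⟨hj, w, hwC, hwadj⟩ := hadj'
              subst hj
              rw [gmem0 S]
              intro h0
              have hwS : w ∈ S := (hdich S hS).1 h0 hwC
              have : σ w u.1 = false := hbd w hwC u.1 u.2 hwadj.symm
              exact ((hS u.1).mp huS).2 w ⟨hwadj.symm, this⟩ hwS
        · refine iff_of_false (fun h => huS ((gmem1 S u).mp h)) ?_
          rintro ⟨h1, h2⟩
          have hnRHS : ¬ ((∀ w, posOf H σ w u.1 → w ∈ S) ∧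
              (∀ w, negOf H σ w u.1 → w ∉ S)) := fun h => huS ((hS u.1).mpr h)
          rcases not_and_or.mp hnRHS with hA | hB
          · push_neg at hA
            obtain ⟨w, ⟨hadjw, htw⟩, hwS⟩ := hA
            have hwC : w ∉ C := by
              intro hwC
              exact u.2 (hCsym w hwC u.1 (Relation.ReflTransGen.single ⟨hadjw, htw⟩))
            have hadj' : (quotG H C).Adj (Sum.inl ⟨w, hwC⟩) (Sum.inl u) := hadjw
            exact hwS ((gmem1 S ⟨w, hwC⟩).mp
              (h1 (Sum.inl ⟨w, hwC⟩) ⟨hadj', by rw [τll]; exact htw⟩))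
          · push_neg at hB
            obtain ⟨w, ⟨hadjw, htw⟩, hwS⟩ := hB
            by_cases hwC : w ∈ C
            · have h0 : u₀ ∈ S := by
                by_contra h0
                exact ((hdich S hS).2 h0 w hwC) hwS
              have hadj' : (quotG H C).Adj (Sum.inr 0) (Sum.inl u) := ⟨rfl, w, hwC, hadjw.symm⟩
              exact h2 (Sum.inr 0) ⟨hadj', τr1 0 (Sum.inl u)⟩ ((gmem0 S).mpr h0)
            · have hadj' : (quotG H C).Adj (Sum.inl ⟨w, hwC⟩) (Sum.inl u) := hadjw
              exact h2 (Sum.inl ⟨w, hwC⟩) ⟨hadj', by rw [τll]; exact htw⟩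
                ((gmem1 S ⟨w, hwC⟩).mpr hwS)
    have hinj : Set.InjOn g {S | IsFixedSet (posOf H σ) (negOf H σ) S} := by
      intro S1 hS1 S2 hS2 heq
      have h0 : u₀ ∈ S1 ↔ u₀ ∈ S2 := by
        rw [← gmem0 S1, ← gmem0 S2, heq]
      have e1 : ∀ S, IsFixedSet (posOf H σ) (negOf H σ) S → ∀ v ∈ C, (v ∈ S ↔ u₀ ∈ S) := by
        intro S hS v hv
        constructor
        · intro h
          by_contra h0'
          exact ((hdich S hS).2 h0' v hv) h
        · intro h
          exact (hdich S hS).1 h hv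
      ext v
      by_cases hv : v ∈ C
      · rw [e1 S1 hS1 v hv, e1 S2 hS2 v hv, h0]
      · rw [← gmem1 S1 ⟨v, hv⟩, ← gmem1 S2 ⟨v, hv⟩, heq]
    exact Set.ncard_le_ncard_of_injOn g hmap hinj (Set.toFinite _)
  · -- cardinality decrease
    set A := {p : ({v : W // v ∉ C} ⊕ Fin 2) × ({v : W // v ∉ C} ⊕ Fin 2) |
      (quotG H C).Adj p.1 p.2 ∧ τ p.1 p.2 = true} with hAdef
    set B := {p : W × W | H.Adj p.1 p.2 ∧ σ p.1 p.2 = true} with hBdef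
    have hxB : (u₀, v₀) ∈ B := ⟨hadj0, hpos0⟩
    set j : ({v : W // v ∉ C} ⊕ Fin 2) × ({v : W // v ∉ C} ⊕ Fin 2) → W × W :=
      fun p => (Sum.elim Subtype.val (fun _ => u₀) p.1,
                Sum.elim Subtype.val (fun _ => u₀) p.2) with hjdef
    have hinl : ∀ p ∈ A, ∃ u v, p = (Sum.inl u, Sum.inl v) := by
      rintro ⟨a, b⟩ ⟨_, ht'⟩
      match a, b with
      | Sum.inl u, Sum.inl v => exact ⟨u, v, rfl⟩
      | Sum.inl u, Sum.inr i => simp [τr2] at ht'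
      | Sum.inr i, b => simp [τr1] at ht'
    have hmapj : ∀ p ∈ A, j p ∈ B \ {(u₀, v₀)} := by
      intro p hp
      obtain ⟨u, v, rfl⟩ := hinl p hp
      obtain ⟨hadj', ht'⟩ := hp
      have hadjH : H.Adj u.1 v.1 := hadj'
      refine ⟨⟨hadjH, by rwa [τll] at ht'⟩, ?_⟩
      intro hmem
      rw [Set.mem_singleton_iff] at hmem
      have : u.1 = u₀ := congrArg Prod.fst hmem
      exact u.2 (this ▸ hu₀)
    have hinjj : Set.InjOn j A := by
      intro p1 h1 p2 h2 heq
      obtain ⟨u1, v1, rfl⟩ := hinl p1 h1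
      obtain ⟨u2, v2, rfl⟩ := hinl p2 h2
      have e1 : u1.1 = u2.1 := congrArg Prod.fst heq
      have e2 : v1.1 = v2.1 := congrArg Prod.snd heq
      rw [Prod.ext_iff]
      exact ⟨congrArg Sum.inl (Subtype.ext e1), congrArg Sum.inl (Subtype.ext e2)⟩
    calc A.ncard ≤ (B \ {(u₀, v₀)}).ncard :=
          Set.ncard_le_ncard_of_injOn j hmapj hinjj (Set.toFinite _)
      _ < B.ncard := Set.ncard_diff_singleton_lt_of_mem hxB (Set.toFinite _)


lemma mainA {V : Type} [Finite V] (G : SimpleGraph V) {W : Type} (H : SimpleGraph W)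
    (hH : InH' G H) :
    ∀ τ : W → W → Bool, (∀ a b, τ a b = τ b a) →
      ∃ σ : V → V → Bool, (∀ u v, σ u v = σ v u) ∧
        fixc (posOf H τ) (negOf H τ) ≤ fixc (posOf G σ) (negOf G σ) := by
  induction hH with
  | base => exact fun τ hτ => ⟨τ, hτ, le_refl _⟩
  | step C hconn hnt hH ih =>
    intro τ hτ
    haveI := InH'_finite hH
    obtain ⟨σ₁, hσ₁, hle₁⟩ := stepA _ C hconn hnt τ hτ
    obtain ⟨σ, hσ, hle⟩ := ih σ₁ hσ₁
    exact ⟨σ, hσ, hle₁.trans hle⟩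

lemma mainB : ∀ (n : ℕ) {W : Type} [Finite W] (H : SimpleGraph W)
    (σ : W → W → Bool), (∀ u v, σ u v = σ v u) →
    {p : W × W | H.Adj p.1 p.2 ∧ σ p.1 p.2 = true}.ncard ≤ n →
    ∃ (W' : Type) (H' : SimpleGraph W'), InH' H H' ∧
      fixc (posOf H σ) (negOf H σ) ≤ misc H'.Adj := by
  intro n
  induction n with
  | zero =>
    intro W _ H σ hσ hle
    have h : ∀ u v, H.Adj u v → σ u v = false := by
      intro u v hadj
      cases hb : σ u v with
      | false => rfl
      | true =>
        exfalso
        have hne : {p : W × W | H.Adj p.1 p.2 ∧ σ p.1 p.2 = true}.Nonempty :=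
          ⟨(u, v), hadj, hb⟩
        have := (Set.ncard_pos (Set.toFinite _)).mpr hne
        omega
    exact ⟨W, H, InH'.base, le_of_eq (fixc_eq_misc H σ h)⟩
  | succ n ih =>
    intro W _ H σ hσ hle
    by_cases hpe : ∃ u v, H.Adj u v ∧ σ u v = true
    · obtain ⟨u₀, v₀, hadj0, hpos0⟩ := hpe
      obtain ⟨C, τ, hconn, hnt, hτsymm, hfix, hlt⟩ := stepB H σ hσ hadj0 hpos0
      have hle' : {p : ({v : W // v ∉ C} ⊕ Fin 2) × ({v : W // v ∉ C} ⊕ Fin 2) |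
          (quotG H C).Adj p.1 p.2 ∧ τ p.1 p.2 = true}.ncard ≤ n := by omega
      obtain ⟨W', H', hin, hle2⟩ := ih (quotG H C) τ hτsymm hle'
      exact ⟨W', H', InH'_trans (InH'.step C hconn hnt InH'.base) hin, hfix.trans hle2⟩
    · push_neg at hpe
      have h : ∀ u v, H.Adj u v → σ u v = false := by
        intro u v hadj
        cases hb : σ u v with
        | false => rfl
        | true => exact absurd hb (hpe u v hadj)
      exact ⟨W, H, InH'.base, le_of_eq (fixc_eq_misc H σ h)⟩


/-- `max_σ fix(G_σ) = max_{H ∈ 𝓗'(G)} mis(H)`. -/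
theorem stmt15 {V : Type} [Fintype V] (G : SimpleGraph V) :
    ∃ σ : V → V → Bool, (∀ u v, σ u v = σ v u) ∧
      (∀ σ' : V → V → Bool, (∀ u v, σ' u v = σ' v u) →
        fixc (posOf G σ') (negOf G σ') ≤ fixc (posOf G σ) (negOf G σ)) ∧
      (∃ (W : Type) (H : SimpleGraph W), InH' G H ∧
        misc H.Adj = fixc (posOf G σ) (negOf G σ)) ∧
      (∀ (W : Type) (H : SimpleGraph W), InH' G H →
        misc H.Adj ≤ fixc (posOf G σ) (negOf G σ)) := by
  haveI : Finite V := Finite.of_fintype V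
  haveI : Nonempty {σ : V → V → Bool // ∀ u v, σ u v = σ v u} :=
    ⟨⟨fun _ _ => false, fun _ _ => rfl⟩⟩
  obtain ⟨⟨σ, hσ⟩, hmax⟩ := Finite.exists_max
    (fun s : {σ : V → V → Bool // ∀ u v, σ u v = σ v u} =>
      fixc (posOf G s.1) (negOf G s.1))
  have hA : ∀ (W : Type) (H : SimpleGraph W), InH' G H →
      misc H.Adj ≤ fixc (posOf G σ) (negOf G σ) := by
    intro W H hH
    obtain ⟨σ₁, hσ₁, hle⟩ := mainA G H hH (fun _ _ => false) (fun _ _ => rfl)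
    have e : misc H.Adj = fixc (posOf H (fun _ _ => false)) (negOf H (fun _ _ => false)) :=
      (fixc_eq_misc H _ (fun _ _ _ => rfl)).symm
    rw [e]
    exact hle.trans (hmax ⟨σ₁, hσ₁⟩)
  obtain ⟨W0, H0, hin0, hle0⟩ := mainB _ G σ hσ
    (le_refl {p : V × V | G.Adj p.1 p.2 ∧ σ p.1 p.2 = true}.ncard)
  exact ⟨σ, hσ, fun σ' hσ' => hmax ⟨σ', hσ'⟩,
    ⟨W0, H0, hin0, le_antisymm (hA W0 H0 hin0) hle0⟩, hA⟩
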